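/- arXiv:1807.08298 — 10 statements merged into one kernel-verified Lean document; each statement's English description precedes it below -/
import Mathlib

section
/- Let (x_1,x_2,x_3,x_4) ∈ (ℝ_{>0})^4 and let λ, λ' ∈ (ℝ_{>0})^6 (indexed by the edges a,...,f as above) satisfy Φ(λ') = r·Φ(λ) for some r > 0, where Φ is the triangle-product map. Then there exist μ_1, μ_2, μ_3 > 0 such that λ'(e) = μ_i μ_j λ(e) whenever edge e joins vertices v_i and v_j (with a,d joining v_1 v_2; b,e joining v_2 v_3; c,f joining v_3 v_1). -/
private lemma key_ratios (α β γ δ ε φ r : ℝ)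
    (hα : 0 < α) (hβ : 0 < β) (hγ : 0 < γ) (hδ : 0 < δ) (hε : 0 < ε) (hφ : 0 < φ)
    (e1 : β * δ * φ = r) (e2 : γ * δ * ε = r) (e3 : α * ε * φ = r)
    (e4 : α * β * γ = r) :
    ∃ μ1 μ2 μ3 : ℝ, 0 < μ1 ∧ 0 < μ2 ∧ 0 < μ3 ∧
      μ1 * μ2 = α ∧ μ1 * μ2 = δ ∧ μ2 * μ3 = β ∧ μ2 * μ3 = ε ∧
      μ3 * μ1 = γ ∧ μ3 * μ1 = φ := by
  have e13 : β * δ = α * ε := mul_right_cancel₀ hφ.ne' (e1.trans e3.symm)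
  have e24 : δ * ε = α * β := by
    have h : (δ * ε) * γ = (α * β) * γ := by linear_combination e2 - e4
    exact mul_right_cancel₀ hγ.ne' h
  have hδα : δ = α := by
    have hsq : δ ^ 2 * (β * ε) = α ^ 2 * (β * ε) := by
      linear_combination δ * ε * e13 + α * ε * e24
    have h2' : δ ^ 2 = α ^ 2 := mul_right_cancel₀ (by positivity) hsq
    nlinarith [h2', hδ, hα]
  have hεβ : ε = β := by
    have h : α * ε = α * β := by linear_combination -e13 + β * hδα
    linarith [mul_left_cancel₀ hα.ne' h]
  have hφγ : φ = γ := by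
    have h : (α * β) * φ = (α * β) * γ := by
      linear_combination e1 - e4 - β * φ * hδα
    exact mul_left_cancel₀ (by positivity) h
  refine ⟨Real.sqrt (α * γ / β), Real.sqrt (α * β / γ), Real.sqrt (β * γ / α),
    Real.sqrt_pos.2 (by positivity), Real.sqrt_pos.2 (by positivity),
    Real.sqrt_pos.2 (by positivity), ?_, ?_, ?_, ?_, ?_, ?_⟩ <;>
    rw [← Real.sqrt_mul (by positivity)]
  · have h : α * γ / β * (α * β / γ) = α ^ 2 := by field_simp
    rw [h, Real.sqrt_sq hα.le]
  · have h : α * γ / β * (α * β / γ) = α ^ 2 := by field_simp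
    rw [h, Real.sqrt_sq hα.le, hδα]
  · have h : α * β / γ * (β * γ / α) = β ^ 2 := by field_simp
    rw [h, Real.sqrt_sq hβ.le]
  · have h : α * β / γ * (β * γ / α) = β ^ 2 := by field_simp
    rw [h, Real.sqrt_sq hβ.le, hεβ]
  · have h : β * γ / α * (α * γ / β) = γ ^ 2 := by field_simp
    rw [h, Real.sqrt_sq hγ.le]
  · have h : β * γ / α * (α * γ / β) = γ ^ 2 := by field_simp
    rw [h, Real.sqrt_sq hγ.le, hφγ]

/-- If two positive edge-length vectors have proportional triangle products
(Φ(λ') = r·Φ(λ)), then they differ by the vertex action: λ'(e) = μ_i μ_j λ(e)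
whenever the edge e joins the vertices v_i and v_j (a, d join v₁v₂; b, e join v₂v₃;
c, f join v₃v₁). -/
theorem stmt1 (la lb lc ld le lf la' lb' lc' ld' le' lf' r : ℝ)
    (hla : 0 < la) (hlb : 0 < lb) (hlc : 0 < lc) (hld : 0 < ld) (hle : 0 < le)
    (hlf : 0 < lf)
    (hla' : 0 < la') (hlb' : 0 < lb') (hlc' : 0 < lc') (hld' : 0 < ld')
    (hle' : 0 < le') (hlf' : 0 < lf') (hr : 0 < r)
    (h1 : lb' * ld' * lf' = r * (lb * ld * lf))
    (h2 : lc' * ld' * le' = r * (lc * ld * le))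
    (h3 : la' * le' * lf' = r * (la * le * lf))
    (h4 : la' * lb' * lc' = r * (la * lb * lc)) :
    ∃ μ1 μ2 μ3 : ℝ, 0 < μ1 ∧ 0 < μ2 ∧ 0 < μ3 ∧
      la' = μ1 * μ2 * la ∧ ld' = μ1 * μ2 * ld ∧
      lb' = μ2 * μ3 * lb ∧ le' = μ2 * μ3 * le ∧
      lc' = μ3 * μ1 * lc ∧ lf' = μ3 * μ1 * lf := by
  obtain ⟨μ1, μ2, μ3, hμ1, hμ2, hμ3, k1, k2, k3, k4, k5, k6⟩ :=
    key_ratios (la' / la) (lb' / lb) (lc' / lc) (ld' / ld) (le' / le) (lf' / lf) r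
      (div_pos hla' hla) (div_pos hlb' hlb) (div_pos hlc' hlc) (div_pos hld' hld)
      (div_pos hle' hle) (div_pos hlf' hlf)
      (by field_simp; linear_combination h1)
      (by field_simp; linear_combination h2)
      (by field_simp; linear_combination h3)
      (by field_simp; linear_combination h4)
  refine ⟨μ1, μ2, μ3, hμ1, hμ2, hμ3, ?_, ?_, ?_, ?_, ?_, ?_⟩
  · rw [eq_div_iff hla.ne'] at k1; linarith
  · rw [eq_div_iff hld.ne'] at k2; linarith
  · rw [eq_div_iff hlb.ne'] at k3; linarith
  · rw [eq_div_iff hle.ne'] at k4; linarith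
  · rw [eq_div_iff hlc.ne'] at k5; linarith
  · rw [eq_div_iff hlf.ne'] at k6; linarith
end

section
/- For positive reals X_1, X_2, X_3, X_4 with X_4 ≥ X_3 ≥ X_2 ≥ X_1 and X_4 ≥ X_1 + X_2 + X_3, define X_1' = ((−X_1+X_2+X_3)/X_4)·X_1, X_2' = ((X_1−X_2+X_3)/X_4)·X_2, X_3' = (|X_1+X_2−X_3|/X_4)·X_3, X_4' = (−X_1+X_2+X_3)(X_1−X_2+X_3)|X_1+X_2−X_3|/X_4² (assuming −X_1+X_2+X_3 > 0, X_1−X_2+X_3 > 0, X_1+X_2−X_3 ≠ 0). Then X_1' + X_2' + X_3' ≥ X_4'. -/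
/-- After a triangle switch along the maximal triangle (Euler class 1),
the new coordinates satisfy X₁' + X₂' + X₃' ≥ X₄'. -/
theorem stmt3 (X1 X2 X3 X4 : ℝ)
    (h1 : 0 < X1) (h2 : 0 < X2) (h3 : 0 < X3) (h4 : 0 < X4)
    (h12 : X1 ≤ X2) (h23 : X2 ≤ X3) (h34 : X3 ≤ X4)
    (hmax : X1 + X2 + X3 ≤ X4)
    (ha : 0 < -X1 + X2 + X3) (hb : 0 < X1 - X2 + X3) (hc : X1 + X2 - X3 ≠ 0) :
    ((-X1 + X2 + X3) / X4) * X1 + ((X1 - X2 + X3) / X4) * X2 +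
      (|X1 + X2 - X3| / X4) * X3 ≥
    (-X1 + X2 + X3) * (X1 - X2 + X3) * |X1 + X2 - X3| / X4 ^ 2 := by
  rw [ge_iff_le, div_le_iff₀ (by positivity), div_mul_eq_mul_div, div_mul_eq_mul_div,
    div_mul_eq_mul_div, ← add_div, ← add_div, div_mul_eq_mul_div,
    pow_two, ← mul_assoc, mul_div_assoc, div_self h4.ne', mul_one]
  set a := -X1 + X2 + X3 with hadef
  set b := X1 - X2 + X3 with hbdef
  set c := |X1 + X2 - X3| with hcdef
  have hc0 : 0 ≤ c := abs_nonneg _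
  have haX4 : a ≤ X4 := by simp only [hadef]; linarith
  have hkey : b * c ≤ b * X2 + c * X3 := by
    rcases abs_cases (X1 + X2 - X3) with ⟨he, hs⟩ | ⟨he, hs⟩
    · have hcle : c ≤ X2 := by rw [hcdef, he]; linarith
      nlinarith [mul_nonneg hb.le (sub_nonneg.2 hcle), mul_nonneg hc0 h3.le]
    · have hble : b ≤ X3 := by simp only [hbdef]; linarith
      have : c = X3 - X1 - X2 := by rw [hcdef, he]; ring
      nlinarith [mul_pos h2 h3, mul_nonneg hc0 (sub_nonneg.2 hble)]
  calc a * b * c ≤ a * (b * X2 + c * X3) := by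
        nlinarith [mul_nonneg hb.le hc0]
    _ ≤ X4 * (b * X2 + c * X3) := by
        apply mul_le_mul_of_nonneg_right haX4
        positivity
    _ ≤ (a * X1 + b * X2 + c * X3) * X4 := by
        nlinarith [mul_nonneg ha.le h1.le]
end

section
/- Let X_1, X_2, X_3, X_4 > 0 with X_4 ≥ X_3 ≥ X_2 ≥ X_1, X_4 ≥ X_1 + X_2 + X_3, and X_1 + X_2 ≥ X_3, and suppose −X_1+X_2+X_3 > 0 and X_1−X_2+X_3 > 0. Define X_i' as in the triangle switch formulas (X_1' = (−X_1+X_2+X_3)X_1/X_4, X_2' = (X_1−X_2+X_3)X_2/X_4, X_3' = (X_1+X_2−X_3)X_3/X_4, X_4' = (−X_1+X_2+X_3)(X_1−X_2+X_3)(X_1+X_2−X_3)/X_4²). Then (X_1', X_2', X_3', X_4') satisfies the generalized triangle inequalities: each coordinate is at most the sum of the other three. -/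
private lemma gti_aux (a b c X4 : ℝ) (ha : 0 < a) (hb : 0 < b) (hc : 0 ≤ c)
    (hsum : a + b + c ≤ X4) (h4 : 0 < X4) :
    a * ((b + c) / 2) * X4 ≤ b * ((a + c) / 2) * X4 + c * ((a + b) / 2) * X4 + a * b * c ∧
    b * ((a + c) / 2) * X4 ≤ a * ((b + c) / 2) * X4 + c * ((a + b) / 2) * X4 + a * b * c ∧
    c * ((a + b) / 2) * X4 ≤ a * ((b + c) / 2) * X4 + b * ((a + c) / 2) * X4 + a * b * c ∧
    a * b * c ≤ a * ((b + c) / 2) * X4 + b * ((a + c) / 2) * X4 + c * ((a + b) / 2) * X4 := by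
  have h1 : 0 ≤ b * c * X4 := by positivity
  have h2 : 0 ≤ a * c * X4 := by positivity
  have h3 : 0 ≤ a * b * c := by positivity
  have h4' : 0 ≤ a * b * X4 := by positivity
  have h5 : a * b * c ≤ a * b * X4 :=
    mul_le_mul_of_nonneg_left (by linarith) (by positivity)
  refine ⟨by linarith [h1, h3], by linarith [h2, h3], by nlinarith, by nlinarith⟩

/-- Case I of the trace reduction algorithm (Euler class ±1): if X₁ + X₂ ≥ X₃,
the coordinates after the triangle switch satisfy the generalized triangle
inequalities. -/
theorem stmt4 (X1 X2 X3 X4 : ℝ)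
    (h1 : 0 < X1) (h2 : 0 < X2) (h3 : 0 < X3) (h4 : 0 < X4)
    (h12 : X1 ≤ X2) (h23 : X2 ≤ X3) (h34 : X3 ≤ X4)
    (hmax : X1 + X2 + X3 ≤ X4) (hI : X1 + X2 ≥ X3)
    (ha : 0 < -X1 + X2 + X3) (hb : 0 < X1 - X2 + X3) :
    let X1' := (-X1 + X2 + X3) * X1 / X4
    let X2' := (X1 - X2 + X3) * X2 / X4
    let X3' := (X1 + X2 - X3) * X3 / X4
    let X4' := (-X1 + X2 + X3) * (X1 - X2 + X3) * (X1 + X2 - X3) / X4 ^ 2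
    X1' ≤ X2' + X3' + X4' ∧ X2' ≤ X1' + X3' + X4' ∧
      X3' ≤ X1' + X2' + X4' ∧ X4' ≤ X1' + X2' + X3' := by
  intro X1' X2' X3' X4'
  have h4' : X4 ≠ 0 := h4.ne'
  have hsq : (0:ℝ) < X4 ^ 2 := by positivity
  obtain ⟨k1, k2, k3, k4⟩ := gti_aux (-X1 + X2 + X3) (X1 - X2 + X3) (X1 + X2 - X3) X4
    ha hb (by linarith) (by linarith) h4
  have e1 : X1' = (-X1 + X2 + X3) * (((X1 - X2 + X3) + (X1 + X2 - X3)) / 2) * X4 / X4 ^ 2 := by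
    simp only [X1']; field_simp; ring
  have e2 : X2' = (X1 - X2 + X3) * (((-X1 + X2 + X3) + (X1 + X2 - X3)) / 2) * X4 / X4 ^ 2 := by
    simp only [X2']; field_simp; ring
  have e3 : X3' = (X1 + X2 - X3) * (((-X1 + X2 + X3) + (X1 - X2 + X3)) / 2) * X4 / X4 ^ 2 := by
    simp only [X3']; field_simp; ring
  have e4 : X4' = (-X1 + X2 + X3) * (X1 - X2 + X3) * (X1 + X2 - X3) / X4 ^ 2 := rfl
  refine ⟨?_, ?_, ?_, ?_⟩ <;>
    rw [e1, e2, e3, e4, ← add_div, ← add_div, div_le_div_iff_of_pos_right hsq]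
  · linarith [k1]
  · linarith [k2]
  · linarith [k3]
  · linarith [k4]
end

section
/- Let X_1, X_2, X_3, X_4 > 0 with X_4 ≥ X_3 ≥ X_2 ≥ X_1, X_4 ≥ X_1 + X_2 + X_3, and X_1 + X_2 < X_3. Define X_1', X_2', X_3', X_4' by the triangle switch formulas (with |X_1+X_2−X_3| = X_3−X_1−X_2). Then X_1' + X_3' − X_2' = ((X_3−X_2)² − X_1²)/X_4 > 0, and consequently X_1' + X_3' + X_4' > X_2' and X_2' + X_3' + X_4' > X_1'. -/
/-- Case II of the trace reduction algorithm (Euler class ±1): if X₁ + X₂ < X₃,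
then X₁' + X₃' − X₂' = ((X₃−X₂)² − X₁²)/X₄ > 0, and consequently
X₁' + X₃' + X₄' > X₂' and X₂' + X₃' + X₄' > X₁'. -/
theorem stmt5 (X1 X2 X3 X4 : ℝ)
    (h1 : 0 < X1) (h2 : 0 < X2) (h3 : 0 < X3) (h4 : 0 < X4)
    (h12 : X1 ≤ X2) (h23 : X2 ≤ X3) (h34 : X3 ≤ X4)
    (hmax : X1 + X2 + X3 ≤ X4) (hII : X1 + X2 < X3) :
    let X1' := (-X1 + X2 + X3) * X1 / X4
    let X2' := (X1 - X2 + X3) * X2 / X4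
    let X3' := (X3 - X1 - X2) * X3 / X4
    let X4' := (-X1 + X2 + X3) * (X1 - X2 + X3) * (X3 - X1 - X2) / X4 ^ 2
    X1' + X3' - X2' = ((X3 - X2) ^ 2 - X1 ^ 2) / X4 ∧
      0 < X1' + X3' - X2' ∧
      X2' < X1' + X3' + X4' ∧ X1' < X2' + X3' + X4' := by
  intro X1' X2' X3' X4'
  have hne : X4 ≠ 0 := ne_of_gt h4
  have heq : X1' + X3' - X2' = ((X3 - X2) ^ 2 - X1 ^ 2) / X4 := by
    simp only [X1', X2', X3']
    field_simp
    ring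
  have hpos : 0 < ((X3 - X2) ^ 2 - X1 ^ 2) / X4 := by
    apply div_pos _ h4
    nlinarith [sq_nonneg (X3 - X2 - X1)]
  have h4' : 0 < X4' := by
    simp only [X4']
    apply div_pos _ (by positivity)
    have a1 : 0 < -X1 + X2 + X3 := by linarith
    have a2 : 0 < X1 - X2 + X3 := by linarith
    have a3 : 0 < X3 - X1 - X2 := by linarith
    positivity
  have h3' : 0 < X3' := by
    simp only [X3']
    apply div_pos _ h4
    nlinarith
  have h21 : X1' ≤ X2' := by
    simp only [X1', X2']
    exact (div_le_div_iff_of_pos_right h4).mpr (by nlinarith)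
  refine ⟨heq, heq ▸ hpos, by nlinarith [heq, hpos], by linarith⟩
end

section
/- Let X_1, X_2, X_3, X_4 > 0 with X_4 ≥ X_3 ≥ X_2 ≥ X_1, X_4 ≥ X_1 + X_2 + X_3, and X_1 + X_2 < X_3. With the triangle switch formulas, one has (X_1' + X_2')/X_3' ≥ ((X_1−X_2+X_3)/(−X_1−X_2+X_3)) · (X_1+X_2)/X_3 ≥ (X_1+X_2)/X_3. In particular the ratio (X_1+X_2)/X_3 is nondecreasing under the switch in this regime. -/
/-- In Case II (X₁ + X₂ < X₃), the ratio (X₁+X₂)/X₃ is nondecreasing under the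
triangle switch: (X₁'+X₂')/X₃' ≥ ((X₁−X₂+X₃)/(−X₁−X₂+X₃))·(X₁+X₂)/X₃ ≥ (X₁+X₂)/X₃. -/
theorem stmt6 (X1 X2 X3 X4 : ℝ)
    (h1 : 0 < X1) (h2 : 0 < X2) (h3 : 0 < X3) (h4 : 0 < X4)
    (h12 : X1 ≤ X2) (h23 : X2 ≤ X3) (h34 : X3 ≤ X4)
    (hmax : X1 + X2 + X3 ≤ X4) (hII : X1 + X2 < X3) :
    let X1' := (-X1 + X2 + X3) * X1 / X4
    let X2' := (X1 - X2 + X3) * X2 / X4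
    let X3' := (X3 - X1 - X2) * X3 / X4
    (X1' + X2') / X3' ≥
        ((X1 - X2 + X3) / (-X1 - X2 + X3)) * ((X1 + X2) / X3) ∧
      ((X1 - X2 + X3) / (-X1 - X2 + X3)) * ((X1 + X2) / X3) ≥ (X1 + X2) / X3 := by
  intro X1' X2' X3'
  have hd : (0:ℝ) < X3 - X1 - X2 := by linarith
  have hd' : (0:ℝ) < -X1 - X2 + X3 := by linarith
  have h3' : (0:ℝ) < X3' := by positivity
  constructor
  · rw [ge_iff_le, div_mul_div_comm, div_le_div_iff₀ (by positivity) h3']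
    show _ ≤ ((-X1 + X2 + X3) * X1 / X4 + (X1 - X2 + X3) * X2 / X4) * _
    rw [← add_div]
    show (X1 - X2 + X3) * (X1 + X2) * ((X3 - X1 - X2) * X3 / X4) ≤ _
    rw [← mul_div_assoc, div_mul_eq_mul_div, div_le_div_iff₀ h4 h4]
    nlinarith [mul_nonneg (mul_nonneg (mul_nonneg (le_of_lt h1) (sub_nonneg.2 h12)) h3.le) h4.le]
  · rw [ge_iff_le]
    have : (1:ℝ) ≤ (X1 - X2 + X3) / (-X1 - X2 + X3) := by
      rw [le_div_iff₀ hd']; linarith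
    nlinarith [div_pos (by positivity : (0:ℝ) < X1 + X2) h3]
end

section
/- Let a, b, c, d > 0 with a + b + c + d = 1 and d > 1/2. Define a' = M a, b' = M b, c' = M c, d' = M (a+b−c)²/d, where M = 1/(a + b + c + (a+b−c)²/d). Then a' + b' + c' + d' = 1 and 1 − (c + d) < c' + d' < c + d; i.e., |c' + d' − 1/2| < |c + d − 1/2|. -/
/-- Step 2 of the Euler-class-0 termination proof: the normalized triangle switch
preserves the simplex and strictly decreases |c + d − 1/2| when d > 1/2. -/
theorem stmt9 (a b c d : ℝ)
    (ha : 0 < a) (hb : 0 < b) (hc : 0 < c) (hd : 0 < d)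
    (hsum : a + b + c + d = 1) (hhalf : d > 1 / 2) :
    let M := 1 / (a + b + c + (a + b - c) ^ 2 / d)
    let a' := M * a
    let b' := M * b
    let c' := M * c
    let d' := M * ((a + b - c) ^ 2 / d)
    a' + b' + c' + d' = 1 ∧ 1 - (c + d) < c' + d' ∧ c' + d' < c + d ∧
      |c' + d' - 1 / 2| < |c + d - 1 / 2| := by
  intro M a' b' c' d'
  set e : ℝ := (a + b - c) ^ 2 / d with he_def
  have he0 : 0 ≤ e := div_nonneg (sq_nonneg _) hd.le
  have he : e * d = (a + b - c) ^ 2 := by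
    rw [he_def, div_mul_cancel₀ _ hd.ne']
  have hS : 0 < a + b + c + e := by positivity
  have hsum' : a' + b' + c' + d' = 1 := by
    show M * a + M * b + M * c + M * e = 1
    have : M = 1 / (a + b + c + e) := rfl
    rw [this]
    field_simp
  have hcd : c' + d' = (c + e) / (a + b + c + e) := by
    show M * c + M * e = _
    have : M = 1 / (a + b + c + e) := rfl
    rw [this]; field_simp
  have h2 : 1 - (c + d) < c' + d' := by
    rw [hcd, lt_div_iff₀ hS, ← mul_lt_mul_iff_of_pos_right hd]
    have e1 : (1 - (c + d)) * (a + b + c + e) * d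
        = (1 - (c + d)) * ((a + b + c) * d + (a + b - c) ^ 2) := by
      rw [← he]; ring
    have e2 : (c + e) * d = c * d + (a + b - c) ^ 2 := by rw [← he]; ring
    have ht : a + b = 1 - c - d := by linarith
    rw [e1, e2, ht]
    nlinarith [mul_pos hc (show (0:ℝ) < 2*d - 1 by linarith),
      mul_pos (show (0:ℝ) < 1 - c - d by linarith) (show (0:ℝ) < 2*d - 1 by linarith),
      sq_nonneg (1 - 2*c - d), mul_pos hc hd,
      mul_pos (mul_pos hc hd) (show (0:ℝ) < 1 - c - d by linarith),
      sq_nonneg (c + d - 1), mul_pos hc hc]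
  have h3 : c' + d' < c + d := by
    rw [hcd, div_lt_iff₀ hS, ← mul_lt_mul_iff_of_pos_right hd]
    have e1 : (c + d) * (a + b + c + e) * d
        = (c + d) * ((a + b + c) * d + (a + b - c) ^ 2) := by
      rw [← he]; ring
    have e2 : (c + e) * d = c * d + (a + b - c) ^ 2 := by rw [← he]; ring
    have ht : a + b = 1 - c - d := by linarith
    rw [e2, e1, ht]
    nlinarith [mul_pos (mul_pos (show (0:ℝ) < 1 - c - d by linarith)
        (show (0:ℝ) < 2*c + 2*d - 1 by linarith))
        (show (0:ℝ) < 1 - 2*c by linarith)]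
  refine ⟨hsum', h2, h3, ?_⟩
  have hpos : 0 < c + d - 1 / 2 := by linarith
  rw [abs_of_pos hpos, abs_lt]
  constructor <;> linarith
end

section
/- Let a, b, c, d > 0 with a + b + c + d = 1 and d > 1/2. Then a + b + (a+b)·d/(d(1−d) + (1−2c−d)²) = 1 − (4c³ + 4c²(2d−1) + c(2d−1)²)/(d(1−d) + (1−2c−d)²) < 1. -/
/-- Algebraic identity from Step 2 of the Euler-class-0 termination proof. -/
theorem stmt10 (a b c d : ℝ)
    (ha : 0 < a) (hb : 0 < b) (hc : 0 < c) (hd : 0 < d)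
    (hsum : a + b + c + d = 1) (hhalf : d > 1 / 2) :
    a + b + (a + b) * d / (d * (1 - d) + (1 - 2 * c - d) ^ 2) =
      1 - (4 * c ^ 3 + 4 * c ^ 2 * (2 * d - 1) + c * (2 * d - 1) ^ 2) /
        (d * (1 - d) + (1 - 2 * c - d) ^ 2) ∧
    a + b + (a + b) * d / (d * (1 - d) + (1 - 2 * c - d) ^ 2) < 1 := by
  have hd1 : d < 1 := by linarith
  have hden : 0 < d * (1 - d) + (1 - 2 * c - d) ^ 2 := by
    have := sq_nonneg (1 - 2 * c - d); nlinarith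
  have hab : a + b = 1 - c - d := by linarith
  have heq : a + b + (a + b) * d / (d * (1 - d) + (1 - 2 * c - d) ^ 2) =
      1 - (4 * c ^ 3 + 4 * c ^ 2 * (2 * d - 1) + c * (2 * d - 1) ^ 2) /
        (d * (1 - d) + (1 - 2 * c - d) ^ 2) := by
    rw [hab]
    have h2 := hden.ne'
    generalize hD : d * (1 - d) + (1 - 2 * c - d) ^ 2 = D at *
    field_simp
    rw [← hD]
    ring
  refine ⟨heq, ?_⟩
  rw [heq]
  have hnum : 0 < 4 * c ^ 3 + 4 * c ^ 2 * (2 * d - 1) + c * (2 * d - 1) ^ 2 := by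
    nlinarith [mul_pos hc (pow_pos (show (0:ℝ) < 2*c+2*d-1 by linarith) 2)]
  have := div_pos hnum hden
  linarith
end

section
/- Let a, b, c, d be purely-imaginary-trace parameters, i.e., real numbers, and x, y, z real numbers satisfying −a²−b²−c²−d²+x²+y²+z²+(ab+cd)x+(ad+bc)y+(ac+bd)z+abcd+xyz−4 = 0. If x = y = z = 2, then (a+b−(c+d))² = (ab+4)(cd+4), (a+c−(b+d))² = (ac+4)(bd+4), and (a+d−(b+c))² = (ad+4)(bc+4). -/
/-- The trace relation for the free group on three generators, specialized at
x = y = z = 2, factorizes in three equivalent ways. -/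
theorem stmt11 (a b c d x y z : ℝ)
    (hrel : -a ^ 2 - b ^ 2 - c ^ 2 - d ^ 2 + x ^ 2 + y ^ 2 + z ^ 2 +
      (a * b + c * d) * x + (a * d + b * c) * y + (a * c + b * d) * z +
      a * b * c * d + x * y * z - 4 = 0)
    (hx : x = 2) (hy : y = 2) (hz : z = 2) :
    (a + b - (c + d)) ^ 2 = (a * b + 4) * (c * d + 4) ∧
    (a + c - (b + d)) ^ 2 = (a * c + 4) * (b * d + 4) ∧
    (a + d - (b + c)) ^ 2 = (a * d + 4) * (b * c + 4) := by
  subst hx hy hz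
  refine ⟨by nlinarith [hrel], by nlinarith [hrel], by nlinarith [hrel]⟩
end

section
/- For positive reals X_1, X_2, X_3, X_4 and a partition {i,j} ∪ {k,l} = {1,2,3,4}, the inequality |(X_i + X_j − (X_k + X_l))² − 2 X_k X_l| / (X_k X_l) ≤ 2 holds if and only if √X_k ≤ √X_l + √(X_i+X_j), √X_l ≤ √X_k + √(X_i+X_j), and √(X_i+X_j) ≤ √X_k + √X_l, where the numerator uses the signed combination (ε_1 X_1 + ε_2 X_2 + ε_3 X_3 + ε_4 X_4)² with ε_i = ε_j = +1 and ε_k = ε_l = −1. -/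
set_option maxHeartbeats 1600000 in
/-- Euler class 0 trace criterion: for a partition {i,j} ∪ {k,l} of the four
triangle coordinates, |((Xᵢ+Xⱼ)−(Xₖ+Xₗ))² − 2XₖXₗ|/(XₖXₗ) ≤ 2 iff the
square-root triangle inequalities hold among √Xₖ, √Xₗ, √(Xᵢ+Xⱼ). -/
theorem stmt14 (Xi Xj Xk Xl : ℝ)
    (hi : 0 < Xi) (hj : 0 < Xj) (hk : 0 < Xk) (hl : 0 < Xl) :
    |(Xi + Xj - (Xk + Xl)) ^ 2 - 2 * (Xk * Xl)| / (Xk * Xl) ≤ 2 ↔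
      (Real.sqrt Xk ≤ Real.sqrt Xl + Real.sqrt (Xi + Xj) ∧
       Real.sqrt Xl ≤ Real.sqrt Xk + Real.sqrt (Xi + Xj) ∧
       Real.sqrt (Xi + Xj) ≤ Real.sqrt Xk + Real.sqrt Xl) := by
  have hS : 0 < Xi + Xj := by linarith
  set a := Real.sqrt (Xi + Xj) with ha
  set b := Real.sqrt Xk with hb
  set c := Real.sqrt Xl with hc
  have ha2 : a ^ 2 = Xi + Xj := Real.sq_sqrt hS.le
  have hb2 : b ^ 2 = Xk := Real.sq_sqrt hk.le
  have hc2 : c ^ 2 = Xl := Real.sq_sqrt hl.le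
  have hapos : 0 < a := Real.sqrt_pos.2 hS
  have hbpos : 0 < b := Real.sqrt_pos.2 hk
  have hcpos : 0 < c := Real.sqrt_pos.2 hl
  have hbc : 0 < b * c := mul_pos hbpos hcpos
  clear_value a b c
  rw [div_le_iff₀ (by positivity), abs_le]
  constructor
  · rintro ⟨h1, h2⟩
    have key : (a ^ 2 - b ^ 2 - c ^ 2) ^ 2 ≤ (2 * (b * c)) ^ 2 := by
      rw [ha2, hb2, hc2]; nlinarith [h2]
    have hx1 : a ^ 2 - b ^ 2 - c ^ 2 ≤ 2 * (b * c) := by nlinarith [key, hbc]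
    have hx2 : -(2 * (b * c)) ≤ a ^ 2 - b ^ 2 - c ^ 2 := by nlinarith [key, hbc]
    refine ⟨?_, ?_, ?_⟩
    · nlinarith [hx2, hapos, hbpos, hcpos]
    · nlinarith [hx2, hapos, hbpos, hcpos]
    · nlinarith [hx1, hapos, hbpos, hcpos]
  · rintro ⟨h1, h2, h3⟩
    have p1 : 0 ≤ (c + a - b) * (b + a - c) := by
      apply mul_nonneg <;> linarith
    have p2 : 0 ≤ (b + c + a) * (b + c - a) := by
      apply mul_nonneg <;> linarith
    have e2 : (b + c + a) * (b + c - a) = b ^ 2 + 2 * (b * c) + c ^ 2 - a ^ 2 := by ring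
    have e1 : (c + a - b) * (b + a - c) = a ^ 2 - b ^ 2 - c ^ 2 + 2 * (b * c) := by ring
    have hx1 : a ^ 2 - b ^ 2 - c ^ 2 ≤ 2 * (b * c) := by linarith [e2 ▸ p2]
    have hx2 : -(2 * (b * c)) ≤ a ^ 2 - b ^ 2 - c ^ 2 := by linarith [e1 ▸ p1]
    constructor
    · nlinarith [sq_nonneg (Xi + Xj - (Xk + Xl)), mul_pos hk hl]
    · have key : (a ^ 2 - b ^ 2 - c ^ 2) ^ 2 ≤ 4 * (b ^ 2 * c ^ 2) := by
        have := mul_nonneg (by linarith : (0:ℝ) ≤ 2 * (b * c) - (a ^ 2 - b ^ 2 - c ^ 2))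
          (by linarith : (0:ℝ) ≤ 2 * (b * c) + (a ^ 2 - b ^ 2 - c ^ 2))
        nlinarith [this]
      rw [ha2, hb2, hc2] at key
      nlinarith [key]
end

section
/- For positive reals λ(e_1), ..., λ(e_6) (the λ-lengths of a balanced triangulation) and a sign vector ε ∈ {±1}^4 with all ε(t_i) = +1, and a second sign vector ε' ∈ {±1}^4 with at least one negative entry, the trace formula value |tr(M_{ε'}(t_{j_1})⋯M_{ε'}(t_{j_m}))|/(λ(e_{i_1})⋯λ(e_{i_m})) for any closed curve is at most the corresponding value computed with ε, where M_ε(t) is the upper- or lower-triangular matrix with diagonal entries λ(e_1), λ(e_2) and off-diagonal entry ε(t)λ(e_3). Concretely: for matrices of the form [[λ_1, ε σ_3],[0, λ_2]] or [[λ_2, 0],[ε σ_3, λ_1]] with all λ_i, σ_3 > 0 and ε ∈ {±1}, the trace of a product of such matrices is a polynomial in the entries with each monomial carrying a product of the ε's as coefficient, so replacing all ε's by +1 gives a value at least as large in absolute value. -/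
open Matrix

private lemma dom_aux : ∀ (n : ℕ) (f g : Fin n → Matrix (Fin 2) (Fin 2) ℝ),
    (∀ k i j, |f k i j| ≤ g k i j) →
    ∀ i j, |((List.ofFn f).prod) i j| ≤ ((List.ofFn g).prod) i j := by
  intro n
  induction n with
  | zero =>
    intro f g _ i j
    simp [Matrix.one_apply]
    split <;> simp
  | succ n ih =>
    intro f g h i j
    rw [List.ofFn_succ, List.ofFn_succ, List.prod_cons, List.prod_cons]
    have hrest := ih (fun k => f k.succ) (fun k => g k.succ) (fun k => h k.succ)
    rw [Matrix.mul_apply, Matrix.mul_apply]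
    calc |∑ k, f 0 i k * ((List.ofFn fun k => f k.succ).prod) k j|
        ≤ ∑ k, |f 0 i k * ((List.ofFn fun k => f k.succ).prod) k j| :=
          Finset.abs_sum_le_sum_abs _ _
      _ ≤ ∑ k, g 0 i k * ((List.ofFn fun k => g k.succ).prod) k j := by
          apply Finset.sum_le_sum
          intro k _
          rw [abs_mul]
          exact mul_le_mul (h 0 i k) (hrest k j) (abs_nonneg _)
            (le_trans (abs_nonneg _) (h 0 i k))

private lemma dom_nonneg : ∀ (n : ℕ) (g : Fin n → Matrix (Fin 2) (Fin 2) ℝ),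
    (∀ k i j, 0 ≤ g k i j) → ∀ i j, 0 ≤ ((List.ofFn g).prod) i j := by
  intro n
  induction n with
  | zero =>
    intro g _ i j
    simp [Matrix.one_apply]
    split <;> simp
  | succ n ih =>
    intro g h i j
    rw [List.ofFn_succ, List.prod_cons, Matrix.mul_apply]
    exact Finset.sum_nonneg fun k _ =>
      mul_nonneg (h 0 i k) (ih (fun k => g k.succ) (fun k => h k.succ) k j)

/-- Domination: for products of triangular matrices with positive diagonal
entries λ₁, λ₂ and off-diagonal entry ε·σ with ε = ±1, the absolute value of
the trace with arbitrary signs ε is at most the absolute value of the trace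
with all signs +1. -/
theorem stmt19 (m : ℕ) (lam1 lam2 sig : Fin m → ℝ) (form : Fin m → Bool)
    (ε : Fin m → ℝ)
    (hlam1 : ∀ i, 0 < lam1 i) (hlam2 : ∀ i, 0 < lam2 i)
    (hsig : ∀ i, 0 < sig i) (hε : ∀ i, ε i = 1 ∨ ε i = -1) :
    let M : (Fin m → ℝ) → Fin m → Matrix (Fin 2) (Fin 2) ℝ := fun e i =>
      if form i then !![lam1 i, e i * sig i; 0, lam2 i]
      else !![lam2 i, 0; e i * sig i, lam1 i]
    |((List.ofFn (M ε)).prod).trace| ≤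
      |((List.ofFn (M fun _ => 1)).prod).trace| := by
  intro M
  have habs : ∀ k, |ε k| = 1 := by
    intro k; rcases hε k with h | h <;> simp [h]
  have hdom : ∀ k i j, |M ε k i j| ≤ M (fun _ => 1) k i j := by
    intro k i j
    simp only [M]
    split <;> fin_cases i <;> fin_cases j <;>
      simp [abs_mul, habs k, abs_of_pos (hlam1 k), abs_of_pos (hlam2 k),
        abs_of_pos (hsig k), le_refl]
  have hnn : ∀ k i j, 0 ≤ M (fun _ => 1) k i j := by
    intro k i j
    exact le_trans (abs_nonneg _) (hdom k i j)
  have h1 := dom_aux m (M ε) (M fun _ => 1) hdom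
  have h2 := dom_nonneg m (M fun _ => 1) hnn
  unfold Matrix.trace
  have htr : 0 ≤ ∑ i, ((List.ofFn (M fun _ => 1)).prod).diag i :=
    Finset.sum_nonneg fun i _ => h2 i i
  rw [abs_of_nonneg htr]
  calc |∑ i, ((List.ofFn (M ε)).prod).diag i|
      ≤ ∑ i, |((List.ofFn (M ε)).prod).diag i| := Finset.abs_sum_le_sum_abs _ _
    _ ≤ ∑ i, ((List.ofFn (M fun _ => 1)).prod).diag i :=
        Finset.sum_le_sum fun i _ => h1 i i
end
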